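/- (The self-reproducibility problem) Let A ⊆ ℕ be an infinite computably enumerable set and let θ be a quasi-Gödel numbering of S_A. Define K^A = {i : ℕ | ∃ x, θ i x = Part.some i} (the set of i that belong to the range of θ i). Then K^A is computably enumerable but not computable: K^A = Set.range g for some total computable g : ℕ → ℕ, and the membership predicate of K^A is not decidable by any computable function. -/

import Mathlib

/-- `r : ℕ →. ℕ` is an initial-segment function for `A`: its domain is empty or
equals `{m | m < a}` for some `a ∈ A`. -/
def IsInitSeg (A : Set ℕ) (r : ℕ →. ℕ) : Prop :=
  {x : ℕ | (r x).Dom} = (∅ : Set ℕ) ∨ ∃ a ∈ A, {x : ℕ | (r x).Dom} = {m : ℕ | m < a}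

/-- `SA A` is the class of unary partial functions that are either total computable
or initial-segment functions for `A`. -/
def SA (A : Set ℕ) : Set (ℕ →. ℕ) :=
  {r | (∃ f : ℕ → ℕ, Computable f ∧ ∀ x, r x = Part.some (f x)) ∨ IsInitSeg A r}

/-- The extended graph of a unary partial function. -/
def graphE (q : ℕ →. ℕ) : Set ℕ :=
  {n | ∃ y, n = Nat.pair y 0} ∪ {n | ∃ x z, q x = Part.some z ∧ n = Nat.pair x (z + 1)}

/-- The graph of a unary partial function. -/
def pgraph (q : ℕ →. ℕ) : Set ℕ :=
  {n | ∃ x z, q x = Part.some z ∧ n = Nat.pair x z}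

/-- Condition (QGN I): the extended graph of the universal function of `θ` is
enumerated by a total computable function. -/
def QGN1 (θ : ℕ → ℕ →. ℕ) : Prop :=
  ∃ h : ℕ → ℕ, Computable h ∧
    Set.range h = {n | ∃ w, n = Nat.pair w 0} ∪
      {n | ∃ i x z, θ i x = Part.some z ∧ n = Nat.pair (Nat.pair i x) (z + 1)}

/-- Condition (QGN II). -/
def QGN2 (A : Set ℕ) (θ : ℕ → ℕ →. ℕ) : Prop :=
  ∀ k : ℕ → ℕ → ℕ, Computable₂ k →
    ∃ v : ℕ → ℕ, Computable v ∧
      ∀ i, ∀ r ∈ SA A, Set.range (k i) = graphE r → θ (v i) = r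

/-- A quasi-Gödel numbering of `SA A`. -/
def QuasiGodel (A : Set ℕ) (θ : ℕ → ℕ →. ℕ) : Prop :=
  Set.range θ = SA A ∧ QGN1 θ ∧ QGN2 A θ

/-- A set of naturals is computably enumerable. -/
def CEset (C : Set ℕ) : Prop :=
  C = ∅ ∨ ∃ g : ℕ → ℕ, Computable g ∧ C = Set.range g

/-- The standard Gödel numbering of the unary partial recursive functions. -/
def phi (i : ℕ) : ℕ →. ℕ :=
  Nat.Partrec.Code.eval (Denumerable.ofNat Nat.Partrec.Code i)

open Nat.Partrec (Code)
open Nat.Partrec.Code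

/-- diagonalization enumerator -/
def kfun (i n : ℕ) : ℕ :=
  if (evaln n.unpair.1 (Denumerable.ofNat Code i) 0).isSome
  then Nat.pair n.unpair.2 (n.unpair.2 + 1)
  else Nat.pair n.unpair.2 0

lemma kfun_primrec : Primrec₂ kfun := by
  have h1 : Primrec fun p : ℕ × ℕ =>
      evaln p.2.unpair.1 (Denumerable.ofNat Code p.1) 0 :=
    primrec_evaln.comp ((((Primrec.fst.comp Primrec.unpair).comp Primrec.snd).pair
      ((Primrec.ofNat _).comp Primrec.fst)).pair (Primrec.const 0))
  have hx : Primrec fun p : ℕ × ℕ => p.2.unpair.2 :=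
    (Primrec.snd.comp Primrec.unpair).comp Primrec.snd
  exact (Primrec.ite
    (Primrec.eq.comp (Primrec.option_isSome.comp h1) (Primrec.const true))
    (Primrec₂.natPair.comp hx (Primrec.succ.comp hx))
    (Primrec₂.natPair.comp hx (Primrec.const 0)))

lemma kfun_range_halt {i : ℕ} (h : ((Denumerable.ofNat Code i).eval 0).Dom) :
    Set.range (kfun i) = graphE (fun x => Part.some x) := by
  obtain ⟨y, hy⟩ := Part.dom_iff_mem.1 h
  obtain ⟨s, hs⟩ := evaln_complete.1 hy
  have hsome : (evaln s (Denumerable.ofNat Code i) 0).isSome = true := by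
    rw [Option.mem_def] at hs; rw [hs]; rfl
  ext n
  constructor
  · rintro ⟨m, rfl⟩
    unfold kfun
    split
    · exact Or.inr ⟨m.unpair.2, m.unpair.2, rfl, rfl⟩
    · exact Or.inl ⟨m.unpair.2, rfl⟩
  · rintro (⟨y, rfl⟩ | ⟨x, z, hxz, rfl⟩)
    · refine ⟨Nat.pair 0 y, ?_⟩
      unfold kfun
      simp [evaln]
    · obtain rfl : x = z := by simpa using hxz
      refine ⟨Nat.pair s x, ?_⟩
      unfold kfun
      simp [hsome]

lemma kfun_range_div {i : ℕ} (h : ¬ ((Denumerable.ofNat Code i).eval 0).Dom) :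
    Set.range (kfun i) = graphE (fun _ => Part.none) := by
  have hnone : ∀ s, (evaln s (Denumerable.ofNat Code i) 0).isSome = false := by
    intro s
    cases hh : evaln s (Denumerable.ofNat Code i) 0 with
    | none => rfl
    | some y =>
      exact absurd (Part.dom_iff_mem.2 ⟨y, evaln_sound (Option.mem_def.2 hh)⟩) h
  have hgE : graphE (fun _ => Part.none : ℕ →. ℕ) = {n | ∃ y, n = Nat.pair y 0} := by
    unfold graphE
    ext n
    simp only [Set.mem_union, Set.mem_setOf_eq]
    constructor
    · rintro (hy | ⟨x, z, hz, _⟩)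
      · exact hy
      · exact absurd hz (Part.none_ne_some z)
    · exact Or.inl
  rw [hgE]
  ext n
  constructor
  · rintro ⟨m, rfl⟩
    unfold kfun
    rw [hnone]
    exact ⟨m.unpair.2, by simp⟩
  · rintro ⟨y, rfl⟩
    refine ⟨Nat.pair 0 y, ?_⟩
    unfold kfun
    rw [hnone]
    simp

/-- The self-reproducibility problem `K^A` is computably enumerable but not computable. -/
theorem selfReproducibility_ce_not_computable (A : Set ℕ) (hAinf : A.Infinite)
    (hAce : CEset A) (θ : ℕ → ℕ →. ℕ) (hθ : QuasiGodel A θ) :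
    (∃ g : ℕ → ℕ, Computable g ∧
        {i : ℕ | ∃ x, θ i x = Part.some i} = Set.range g) ∧
    ¬ ComputablePred (fun i => ∃ x, θ i x = Part.some i) := by
  classical
  obtain ⟨hrange, hq1, hq2⟩ := hθ
  have hid : (fun x => Part.some x : ℕ →. ℕ) ∈ SA A :=
    Or.inl ⟨id, Computable.id, fun x => rfl⟩
  have hnone : (fun _ => Part.none : ℕ →. ℕ) ∈ SA A := by
    refine Or.inr (Or.inl ?_)
    ext x
    simp [Part.not_none_dom]
  have hidθ : (fun x => Part.some x : ℕ →. ℕ) ∈ Set.range θ := by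
    rw [hrange]; exact hid
  obtain ⟨i0, hi0⟩ := hidθ
  constructor
  · -- c.e. part
    obtain ⟨h, hcomp, hrangeh⟩ := hq1
    set G : ℕ → ℕ := fun m =>
      if (Nat.unpair m).2 = (Nat.unpair (Nat.unpair m).1).1 + 1
      then (Nat.unpair (Nat.unpair m).1).1 else i0 with hGdef
    have u1 : Primrec fun m : ℕ => (Nat.unpair (Nat.unpair m).1).1 :=
      (Primrec.fst.comp Primrec.unpair).comp (Primrec.fst.comp Primrec.unpair)
    have hGprim : Primrec G :=
      Primrec.ite (Primrec.eq.comp (Primrec.snd.comp Primrec.unpair)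
        (Primrec.succ.comp u1)) u1 (Primrec.const i0)
    refine ⟨fun n => G (h n), hGprim.to_comp.comp hcomp, ?_⟩
    ext i
    simp only [Set.mem_setOf_eq, Set.mem_range]
    constructor
    · rintro ⟨x, hx⟩
      have hmem : Nat.pair (Nat.pair i x) (i + 1) ∈ Set.range h := by
        rw [hrangeh]; exact Or.inr ⟨i, x, i, hx, rfl⟩
      obtain ⟨n, hn⟩ := hmem
      refine ⟨n, ?_⟩
      rw [hn, hGdef]
      simp
    · rintro ⟨n, rfl⟩
      by_cases hc : (Nat.unpair (h n)).2 = (Nat.unpair (Nat.unpair (h n)).1).1 + 1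
      · have hmem : h n ∈ Set.range h := ⟨n, rfl⟩
        rw [hrangeh] at hmem
        rcases hmem with ⟨w, hw⟩ | ⟨j, x, z, hθz, hw⟩
        · rw [hw] at hc; simp at hc
        · rw [hw] at hc
          simp only [Nat.unpair_pair] at hc
          obtain rfl : z = j := by omega
          have : G (h n) = z := by rw [hw, hGdef]; simp
          rw [this]
          exact ⟨x, hθz⟩
      · have : G (h n) = i0 := by rw [hGdef]; simp [hc]
        rw [this]
        exact ⟨i0, by rw [hi0]⟩
  · -- non-computability
    intro hP
    obtain ⟨v, hv, hvspec⟩ := hq2 kfun kfun_primrec.to_comp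
    have key : ∀ i, (∃ x, θ (v i) x = Part.some (v i)) ↔
        ((Denumerable.ofNat Code i).eval 0).Dom := by
      intro i
      by_cases hd : ((Denumerable.ofNat Code i).eval 0).Dom
      · have hvi := hvspec i (fun x => Part.some x) hid (kfun_range_halt hd)
        rw [hvi]
        exact ⟨fun _ => hd, fun _ => ⟨v i, rfl⟩⟩
      · have hvi := hvspec i (fun _ => Part.none) hnone (kfun_range_div hd)
        rw [hvi]
        constructor
        · rintro ⟨x, hx⟩
          exact absurd hx (Part.none_ne_some _)
        · intro h; exact absurd h hd
    have hP' : ComputablePred fun i : ℕ => ((Denumerable.ofNat Code i).eval 0).Dom := by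
      obtain ⟨f, hf, hfp⟩ := ComputablePred.computable_iff.1 hP
      refine ComputablePred.computable_iff.2 ⟨fun i => f (v i), hf.comp hv, ?_⟩
      funext i
      rw [← key i]
      exact congrFun hfp (v i)
    have hcode : ComputablePred fun c : Code => (c.eval 0).Dom := by
      obtain ⟨f, hf, hfp⟩ := ComputablePred.computable_iff.1 hP'
      refine ComputablePred.computable_iff.2
        ⟨fun c => f (Encodable.encode c), hf.comp Computable.encode, ?_⟩
      funext c
      have h2 := congrFun hfp (Encodable.encode c)
      simpa [Denumerable.ofNat_encode] using h2
    exact ComputablePred.halting_problem 0 hcode
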